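/- For every (a,b,c) ∈ ℂ^3, all second-order partial derivatives in x,y,z of the polynomial γ (defined as a^2(5c^3-a^3)h_1 + b^2(b^3-5c^3)h_2 + c^2(c^3-5a^3)h_3 + c^2(5b^3-c^3)h_4 + 5b^2(a^3-c^3)h_5 + 5a^2(c^3-b^3)h_6) vanish at (x,y,z)=(a,b,c); hence the curve γ=0 has multiplicity at least 3 at the general point (a:b:c). -/

import Mathlib

open MvPolynomial

/-- The degree-7 polynomial `γ` attached to a point `(a:b:c)`. -/
noncomputable def gammaP (a b c : ℂ) : MvPolynomial (Fin 3) ℂ :=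
  C (a ^ 2 * (5 * c ^ 3 - a ^ 3)) * (X 0 * ((X 1) ^ 6 - (X 2) ^ 6)) +
  C (b ^ 2 * (b ^ 3 - 5 * c ^ 3)) * (X 1 * ((X 0) ^ 6 - (X 2) ^ 6)) +
  C (c ^ 2 * (c ^ 3 - 5 * a ^ 3)) *
    (X 2 * ((X 0) ^ 3 + (X 1) ^ 3) * ((X 1) ^ 3 + (X 2) ^ 3)) +
  C (c ^ 2 * (5 * b ^ 3 - c ^ 3)) *
    (X 2 * ((X 0) ^ 3 + (X 1) ^ 3) * ((X 0) ^ 3 + (X 2) ^ 3)) +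
  C (5 * b ^ 2 * (a ^ 3 - c ^ 3)) *
    (X 1 * ((X 0) ^ 3 + (X 2) ^ 3) * ((X 1) ^ 3 + (X 2) ^ 3)) +
  C (5 * a ^ 2 * (c ^ 3 - b ^ 3)) *
    (X 0 * ((X 0) ^ 3 + (X 2) ^ 3) * ((X 1) ^ 3 + (X 2) ^ 3))

/-- A variant of `pderiv_pow` whose coefficient is a `C`-constant, so that
iterated `pderiv` computations stay in a controlled form. -/
lemma pderiv_pow' {R σ : Type*} [CommSemiring R] (i : σ) (f : MvPolynomial σ R) (n : ℕ) :
    pderiv i (f ^ n) = C (n : R) * f ^ (n - 1) * pderiv i f := by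
  rw [pderiv_pow, C_eq_coe_nat]

set_option maxHeartbeats 2000000 in
lemma gammaP_pd1 (a b c : ℂ) (i : Fin 3) :
    eval ![a, b, c] (pderiv i (gammaP a b c)) = 0 := by
  have h0 : eval ![a, b, c] (pderiv 0 (gammaP a b c)) = 0 := by
    simp only [gammaP, map_add, pderiv_mul, pderiv_pow', pderiv_C, pderiv_X, map_sub,
      zero_mul, mul_zero, add_zero, zero_add, mul_one, sub_zero]
    simp [Pi.single_apply]; ring
  have h1 : eval ![a, b, c] (pderiv 1 (gammaP a b c)) = 0 := by
    simp only [gammaP, map_add, pderiv_mul, pderiv_pow', pderiv_C, pderiv_X, map_sub,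
      zero_mul, mul_zero, add_zero, zero_add, mul_one, sub_zero]
    simp [Pi.single_apply]; ring
  have h2 : eval ![a, b, c] (pderiv 2 (gammaP a b c)) = 0 := by
    simp only [gammaP, map_add, pderiv_mul, pderiv_pow', pderiv_C, pderiv_X, map_sub,
      zero_mul, mul_zero, add_zero, zero_add, mul_one, sub_zero]
    simp [Pi.single_apply]; ring
  fin_cases i
  · exact h0
  · exact h1
  · exact h2

set_option maxHeartbeats 4000000 in
lemma gammaP_pd2 (a b c : ℂ) (i j : Fin 3) :
    eval ![a, b, c] (pderiv i (pderiv j (gammaP a b c))) = 0 := by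
  fin_cases i <;> fin_cases j <;>
    · simp only [gammaP, map_add, pderiv_mul, pderiv_pow', pderiv_C, pderiv_X, map_sub,
        zero_mul, mul_zero, add_zero, zero_add, mul_one, sub_zero]
      simp [Pi.single_apply]
      ring

/-- All second-order partials of `γ` in `x,y,z` vanish at `(a,b,c)`; together
with vanishing of `γ` and its first partials, the curve `γ = 0` has
multiplicity at least `3` at `(a:b:c)`. -/
theorem stmt9 (a b c : ℂ) :
    eval ![a, b, c] (gammaP a b c) = 0 ∧
    (∀ i : Fin 3, eval ![a, b, c] (pderiv i (gammaP a b c)) = 0) ∧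
    (∀ i j : Fin 3,
      eval ![a, b, c] (pderiv i (pderiv j (gammaP a b c))) = 0) := by
  refine ⟨by simp [gammaP]; ring, gammaP_pd1 a b c, gammaP_pd2 a b c⟩
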